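/- If a vertex (σ,τ) of the Morse complex M(K), corresponding to a regular pair with dim τ = dim σ + 1, dominates some other vertex of M(K), then dim σ = 0 (i.e., the pair has index 1). -/

import Mathlib

open Finset

/-- An abstract simplicial complex on vertex type `V`. -/
structure SComplex (V : Type*) where
  faces : Finset V → Prop
  not_empty : ¬ faces ∅
  down_closed : ∀ {σ τ : Finset V}, faces τ → σ ⊆ τ → σ.Nonempty → faces σ

/-- The complex generated by a set of simplices (downward closure). -/
def ofGens {V : Type*} (gens : Set (Finset V)) : SComplex V where
  faces σ := σ.Nonempty ∧ ∃ τ ∈ gens, σ ⊆ τ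
  not_empty h := by simpa using h.1
  down_closed := by
    rintro σ τ ⟨-, τ', hτ', hsub'⟩ hsub hne
    exact ⟨hne, τ', hτ', hsub.trans hsub'⟩

/-- A primitive (gradient) vector field on `K`: a single regular pair `(σ, τ)`
with `σ` a codimension-one face of `τ`. -/
structure VPair {V : Type*} (K : SComplex V) where
  lo : Finset V
  hi : Finset V
  lo_face : K.faces lo
  hi_face : K.faces hi
  lo_sub : lo ⊆ hi
  card_eq : hi.card = lo.card + 1

noncomputable instance {V : Type*} (K : SComplex V) : DecidableEq (VPair K) :=
  Classical.decEq _

/-- Two primitive pairs share no simplex. -/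
def VPair.Compatible {V : Type*} {K : SComplex V} (p q : VPair K) : Prop :=
  p.lo ≠ q.lo ∧ p.lo ≠ q.hi ∧ p.hi ≠ q.lo ∧ p.hi ≠ q.hi

/-- A discrete vector field: each simplex occurs in at most one pair. -/
def IsDVF {V : Type*} {K : SComplex V} (W : Set (VPair K)) : Prop :=
  ∀ p ∈ W, ∀ q ∈ W, p ≠ q → VPair.Compatible p q

/-- Existence of a nontrivial closed `V`-path. -/
def HasClosedPath {V : Type*} {K : SComplex V} (W : Set (VPair K)) : Prop :=
  ∃ k : ℕ, 0 < k ∧ ∃ c : ZMod k → VPair K, (∀ i, c i ∈ W) ∧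
    ∀ i, (c (i + 1)).lo ⊆ (c i).hi ∧ (c (i + 1)).lo ≠ (c i).lo ∧
      (c (i + 1)).lo.card + 1 = (c i).hi.card

/-- A gradient vector field: a discrete vector field with no nontrivial closed path. -/
def IsGVF {V : Type*} {K : SComplex V} (W : Set (VPair K)) : Prop :=
  IsDVF W ∧ ¬ HasClosedPath W

/-- The Morse complex of `K`: vertices are primitive gradient vector fields,
simplices are gradient vector fields. -/
def MorseComplex {V : Type*} (K : SComplex V) : SComplex (VPair K) where
  faces S := S.Nonempty ∧ IsGVF {p | p ∈ S}
  not_empty h := by simpa using h.1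
  down_closed := by
    rintro σ τ ⟨hne', hdvf, hnc⟩ hsub hne
    refine ⟨hne, fun p hp q hq hpq => hdvf p (hsub hp) q (hsub hq) hpq, fun h => hnc ?_⟩
    obtain ⟨k, hk, c, hc, hpath⟩ := h
    exact ⟨k, hk, c, fun i => hsub (hc i), hpath⟩

/-- The pure Morse complex: the subcomplex of `MorseComplex K` generated by the
facets of maximum dimension (maximum gradient vector fields). -/
def pureMorse {V : Type*} (K : SComplex V) : SComplex (VPair K) where
  faces S := (MorseComplex K).faces S ∧ ∃ T : Finset (VPair K), S ⊆ T ∧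
      (MorseComplex K).faces T ∧
      ∀ T' : Finset (VPair K), (MorseComplex K).faces T' → T'.card ≤ T.card
  not_empty h := (MorseComplex K).not_empty h.1
  down_closed := by
    rintro σ τ ⟨hτ, T, hsub', hT, hmax⟩ hsub hne
    exact ⟨(MorseComplex K).down_closed hτ hsub hne, T, hsub.trans hsub', hT, hmax⟩

/-- `σ` is a facet (maximal simplex) of `K`. -/
def IsFacet {V : Type*} (K : SComplex V) (σ : Finset V) : Prop :=
  K.faces σ ∧ ∀ τ, K.faces τ → σ ⊆ τ → σ = τ

/-- `w` dominates `w'`: every facet containing `w'` contains `w`. -/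
def Dominates {V : Type*} (K : SComplex V) (w w' : V) : Prop :=
  ∀ σ, IsFacet K σ → w' ∈ σ → w ∈ σ

/-- `K` is minimal: no vertex dominates another vertex. -/
def MinimalComplex {V : Type*} (K : SComplex V) : Prop :=
  ∀ w w' : V, K.faces {w} → K.faces {w'} → w ≠ w' → ¬ Dominates K w w'

/-- Strong collapsibility of a face predicate: a sequence of removals of
dominated vertices reaching a single point. -/
inductive SCAux {V : Type*} : (Finset V → Prop) → Prop
  | point (F : Finset V → Prop) (v : V) (h : ∀ σ, F σ ↔ σ = {v}) : SCAux F
  | step (F : Finset V → Prop) (w w' : V) (hne : w ≠ w') (hw : F {w}) (hw' : F {w'})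
      (hdom : ∀ σ, (F σ ∧ ∀ τ, F τ → σ ⊆ τ → σ = τ) → w' ∈ σ → w ∈ σ)
      (h : SCAux (fun σ => F σ ∧ w' ∉ σ)) : SCAux F

def StronglyCollapsible {V : Type*} (K : SComplex V) : Prop := SCAux K.faces

/-- `F` strongly collapses to `G` by a sequence of removals of dominated vertices. -/
inductive SCTo {V : Type*} : (Finset V → Prop) → (Finset V → Prop) → Prop
  | refl (F : Finset V → Prop) : SCTo F F
  | step (F G : Finset V → Prop) (w w' : V) (hne : w ≠ w') (hw : F {w}) (hw' : F {w'})
      (hdom : ∀ σ, (F σ ∧ ∀ τ, F τ → σ ⊆ τ → σ = τ) → w' ∈ σ → w ∈ σ)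
      (h : SCTo (fun σ => F σ ∧ w' ∉ σ) G) : SCTo F G

/-- Collapsibility (Forman): removal of free pairs down to a point. -/
inductive CollAux {V : Type*} : (Finset V → Prop) → Prop
  | point (F : Finset V → Prop) (v : V) (h : ∀ σ, F σ ↔ σ = {v}) : CollAux F
  | step (F : Finset V → Prop) (σ τ : Finset V) (hστ : σ ⊂ τ) (hσ : F σ) (hτ : F τ)
      (hfree : ∀ ρ, F ρ → σ ⊂ ρ → ρ = τ)
      (h : CollAux (fun ρ => F ρ ∧ ρ ≠ σ ∧ ρ ≠ τ)) : CollAux F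

def Collapsible {V : Type*} (K : SComplex V) : Prop := CollAux K.faces

/-- The degree of a vertex: the number of edges of `K` containing it. -/
noncomputable def sdeg {V : Type*} (K : SComplex V) (x : V) : ℕ :=
  Set.ncard {σ : Finset V | K.faces σ ∧ σ.card = 2 ∧ x ∈ σ}

/-- Image of a finset, with a classical decidability instance. -/
noncomputable def fimage {V W : Type*} (f : V → W) (σ : Finset V) : Finset W :=
  haveI := Classical.decEq W
  σ.image f

/-- An isomorphism between two simplicial complexes given by face predicates. -/
structure ComplexIso {V W : Type*} (F : Finset V → Prop) (G : Finset W → Prop) where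
  toFun : V → W
  invFun : W → V
  left_inv : ∀ x, F {x} → invFun (toFun x) = x
  right_inv : ∀ y, G {y} → toFun (invFun y) = y
  map_face : ∀ σ, F σ → G (fimage toFun σ)
  inv_face : ∀ τ, G τ → F (fimage invFun τ)

/-- The join of two simplicial complexes. -/
def sJoin {V W : Type*} [DecidableEq V] [DecidableEq W] (K : SComplex V) (L : SComplex W) :
    SComplex (V ⊕ W) :=
  ofGens {σ | ∃ α β, (K.faces α ∨ α = ∅) ∧ (L.faces β ∨ β = ∅) ∧
    σ = α.image Sum.inl ∪ β.image Sum.inr}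

/-- The disjoint union of two simplicial complexes. -/
def sDisjUnion {V W : Type*} [DecidableEq V] [DecidableEq W] (K : SComplex V) (L : SComplex W) :
    SComplex (V ⊕ W) :=
  ofGens ({σ | ∃ α, K.faces α ∧ σ = α.image Sum.inl} ∪
          {σ | ∃ β, L.faces β ∧ σ = β.image Sum.inr})

/-- The simplicial complex of a simple graph (vertices and edges). -/
def graphComplex {V : Type*} [DecidableEq V] (G : SimpleGraph V) : SComplex V :=
  ofGens ({σ | ∃ x, σ = {x}} ∪ {σ | ∃ x y, G.Adj x y ∧ σ = ({x, y} : Finset V)})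

/-- Attach a leaf (pendant edge) to `K` at the vertex `x`. -/
def attachLeaf {V : Type*} [DecidableEq V] (K : SComplex V) (x : V) : SComplex (V ⊕ Unit) :=
  ofGens ({σ | ∃ α, K.faces α ∧ σ = α.image Sum.inl} ∪
          {({Sum.inl x, Sum.inr ()} : Finset (V ⊕ Unit))})

/-- The cycle graph on `ZMod n`. -/
def cycleGraph (n : ℕ) : SimpleGraph (ZMod n) :=
  SimpleGraph.fromRel (fun i j => j = i + 1)

/-- Attach one new leaf to every vertex of a graph. -/
def addLeaves {V : Type*} [DecidableEq V] (G : SimpleGraph V) : SComplex (V ⊕ V) :=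
  ofGens ({σ | ∃ x y, G.Adj x y ∧ σ = ({Sum.inl x, Sum.inl y} : Finset (V ⊕ V))} ∪
          {σ | ∃ u, σ = ({Sum.inl u, Sum.inr u} : Finset (V ⊕ V))})

/-- The geometric realization of `K`, inside `V → ℝ`. -/
def realization {V : Type*} (K : SComplex V) : Set (V → ℝ) :=
  {f | ∃ σ, K.faces σ ∧ (∀ x, 0 ≤ f x) ∧ (∀ x, f x ≠ 0 → x ∈ σ) ∧ ∑ x ∈ σ, f x = 1}

/-- A Hasse-diagram edge of a poset: a covering pair. -/
structure HEdge (P : Type*) [PartialOrder P] where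
  lo : P
  hi : P
  cov : lo ⋖ hi

noncomputable instance {P : Type*} [PartialOrder P] : DecidableEq (HEdge P) :=
  Classical.decEq _

def HEdge.Compat {P : Type*} [PartialOrder P] (p q : HEdge P) : Prop :=
  p.lo ≠ q.lo ∧ p.lo ≠ q.hi ∧ p.hi ≠ q.lo ∧ p.hi ≠ q.hi

def HasPosetCycle {P : Type*} [PartialOrder P] (W : Set (HEdge P)) : Prop :=
  ∃ k : ℕ, 0 < k ∧ ∃ c : ZMod k → HEdge P, (∀ i, c i ∈ W) ∧
    ∀ i, (c (i + 1)).lo ⋖ (c i).hi ∧ (c (i + 1)).lo ≠ (c i).lo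

/-- The generalized Morse complex `f(P)` of a poset: simplices are acyclic
matchings of the Hasse diagram of `P`. -/
def genMorse (P : Type*) [PartialOrder P] : SComplex (HEdge P) where
  faces S := S.Nonempty ∧ (∀ p ∈ S, ∀ q ∈ S, p ≠ q → HEdge.Compat p q) ∧
    ¬ HasPosetCycle {p | p ∈ S}
  not_empty h := by simpa using h.1
  down_closed := by
    rintro σ τ ⟨-, hm, hc⟩ hsub hne
    refine ⟨hne, fun p hp q hq h => hm p (hsub hp) q (hsub hq) h, fun h => hc ?_⟩
    obtain ⟨k, hk, c, hc', hp⟩ := h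
    exact ⟨k, hk, c, fun i => hsub (hc' i), hp⟩

/-- The automorphism group of a simplicial complex, as a subgroup of `Perm V`. -/
def autGroup {V : Type*} [DecidableEq V] (K : SComplex V) : Subgroup (Equiv.Perm V) where
  carrier := {e | ∀ σ : Finset V, K.faces σ ↔ K.faces (σ.image e)}
  one_mem' := by intro σ; simp
  mul_mem' := by
    intro a b ha hb σ
    rw [hb σ, ha (σ.image b)]
    simp [Finset.image_image, Equiv.Perm.coe_mul]
  inv_mem' := by
    intro a ha σ
    have := ha (σ.image ⇑a⁻¹)
    simpa [Finset.image_image, Function.comp_def, Equiv.apply_symm_apply,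
      Finset.image_id'] using this.symm

/-- The full subcomplex of `K` on a set `S` of vertices. -/
def restrictTo {V : Type*} (K : SComplex V) (S : Set V) : Finset V → Prop :=
  fun σ => K.faces σ ∧ ∀ x ∈ σ, x ∈ S

/-- `S` spans a fully connected subcomplex: `K = (K∣S) * (K∣Sᶜ)`. -/
def FullyConnected {V : Type*} [DecidableEq V] (K : SComplex V) (S : Set V) : Prop :=
  ∀ σ : Finset V, K.faces σ ↔ (σ.Nonempty ∧ ∃ α β : Finset V,
    (restrictTo K S α ∨ α = ∅) ∧ ((K.faces β ∧ ∀ x ∈ β, x ∉ S) ∨ β = ∅) ∧ σ = α ∪ β)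

/-- The primitive pair `(x, xy)` on an edge `{x,y}`. -/
def edgePair {V : Type*} [DecidableEq V] (K : SComplex V) (x y : V) (hxy : x ≠ y)
    (h : K.faces {x, y}) : VPair K where
  lo := {x}
  hi := {x, y}
  lo_face := K.down_closed h (by simp) (Finset.singleton_nonempty x)
  hi_face := h
  lo_sub := by simp
  card_eq := by
    rw [Finset.card_singleton, Finset.card_insert_of_notMem (by simp [hxy]),
      Finset.card_singleton]

lemma VPair.ext' {V : Type*} {K : SComplex V} {p q : VPair K}
    (h1 : p.lo = q.lo) (h2 : p.hi = q.hi) : p = q := by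
  cases p; cases q; simp_all

/-- A singleton is always a face of the Morse complex. -/
lemma singleton_morse_face {V : Type*} (K : SComplex V) (q : VPair K) :
    (MorseComplex K).faces {q} := by
  refine ⟨⟨q, by simp⟩, fun a ha b hb hab => ?_, ?_⟩
  · simp only [Set.mem_setOf_eq, Finset.mem_singleton] at ha hb
    subst ha; subst hb; exact absurd rfl hab
  · rintro ⟨k, hk, c, hc, hpath⟩
    have h1 : c (0 + 1) = q := by simpa using hc (0 + 1)
    have h0 : c 0 = q := by simpa using hc 0
    exact (hpath 0).2.1 (by rw [h0, h1])

/-- Every face of the Morse complex extends to a facet. -/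
lemma exists_morse_facet {V : Type*} [Fintype V] (K : SComplex V)
    (S : Finset (VPair K)) (hS : (MorseComplex K).faces S) :
    ∃ T, IsFacet (MorseComplex K) T ∧ S ⊆ T := by
  classical
  haveI : Finite (VPair K) := Finite.of_injective (fun p => (p.lo, p.hi))
    (fun a b hab => VPair.ext' (congrArg Prod.fst hab) (congrArg Prod.snd hab))
  haveI : Fintype (VPair K) := Fintype.ofFinite _
  let s : Finset (Finset (VPair K)) :=
    Finset.univ.filter (fun T => (MorseComplex K).faces T ∧ S ⊆ T)
  have hSs : S ∈ s := by simp [s, hS]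
  obtain ⟨T, hTs, hmax⟩ := s.exists_maximal ⟨S, hSs⟩
  simp only [s, Finset.mem_filter, Finset.mem_univ, true_and] at hTs
  refine ⟨T, ⟨hTs.1, fun τ hτ hsub => ?_⟩, hTs.2⟩
  by_contra hne
  exact hne (le_antisymm hsub (hmax (by simp [s, hτ, hTs.2.trans hsub]) hsub))

/-- if a vertex `(σ,τ)` of `M(K)` dominates some other vertex,
then `dim σ = 0`, i.e. `σ` is a single vertex. -/
theorem stmt_0 {V : Type*} [Fintype V] (K : SComplex V) (p q : VPair K)
    (hpq : p ≠ q) (h : Dominates (MorseComplex K) p q) : p.lo.card = 1 := by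
  classical
  by_contra hn
  -- `p.lo` has at least two vertices
  have hlo_ne : p.lo.Nonempty := by
    rcases Finset.eq_empty_or_nonempty p.lo with he | he
    · exact absurd (he ▸ p.lo_face) K.not_empty
    · exact he
  have hn2 : 2 ≤ p.lo.card := by
    have := Finset.card_pos.mpr hlo_ne
    omega
  -- p and q are compatible (extend {q} to a facet; domination puts p there)
  obtain ⟨T, hT, hqT⟩ := exists_morse_facet K {q} (singleton_morse_face K q)
  have hqT' : q ∈ T := hqT (Finset.mem_singleton_self q)
  have hpT : p ∈ T := h T hT hqT'
  obtain ⟨h1, h2, h3, h4⟩ := hT.1.2.1 p hpT q hqT' hpq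
  -- choose x ∈ p.lo with p.lo.erase x ∉ {q.lo, q.hi}
  have hqcard : q.hi.card = q.lo.card + 1 := q.card_eq
  have key : ∃ x ∈ p.lo, p.lo.erase x ≠ q.lo ∧ p.lo.erase x ≠ q.hi := by
    by_contra hbad
    push_neg at hbad
    obtain ⟨a, ha, b, hb, hab⟩ := Finset.one_lt_card.mp hn2
    have hex : p.lo.erase a ≠ p.lo.erase b := fun he => by
      have hm : b ∈ p.lo.erase a := Finset.mem_erase.mpr ⟨Ne.symm hab, hb⟩
      rw [he] at hm
      exact (Finset.mem_erase.mp hm).1 rfl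
    have hca : (p.lo.erase a).card = p.lo.card - 1 := Finset.card_erase_of_mem ha
    have hcb : (p.lo.erase b).card = p.lo.card - 1 := Finset.card_erase_of_mem hb
    rcases eq_or_ne (p.lo.erase a) q.lo with hea | hea
    · rcases eq_or_ne (p.lo.erase b) q.lo with heb | heb
      · exact hex (hea.trans heb.symm)
      · have heb' := hbad b hb heb
        rw [hea] at hca; rw [heb'] at hcb; omega
    · have hea' := hbad a ha hea
      rcases eq_or_ne (p.lo.erase b) q.lo with heb | heb
      · rw [hea'] at hca; rw [heb] at hcb; omega
      · exact hex ((hbad a ha hea).trans (hbad b hb heb).symm)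
  obtain ⟨x, hx, hne1, hne2⟩ := key
  -- the auxiliary pair r = (p.lo \ x, p.lo)
  have hr_lo_face : K.faces (p.lo.erase x) :=
    K.down_closed p.lo_face (Finset.erase_subset _ _)
      (Finset.card_pos.mp (by rw [Finset.card_erase_of_mem hx]; omega))
  have hr_card : p.lo.card = (p.lo.erase x).card + 1 := by
    rw [Finset.card_erase_of_mem hx]; omega
  let r : VPair K :=
    ⟨p.lo.erase x, p.lo, hr_lo_face, p.lo_face, Finset.erase_subset _ _, hr_card⟩
  have hrlo : r.lo = p.lo.erase x := rfl
  have hrhi : r.hi = p.lo := rfl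
  have hqr : q ≠ r := fun he => hne1 (by rw [he])
  -- {q, r} is a face of the Morse complex
  have hface : (MorseComplex K).faces {q, r} := by
    refine ⟨⟨q, by simp⟩, fun a ha b hb hab => ?_, ?_⟩
    · simp only [Set.mem_setOf_eq, Finset.mem_insert, Finset.mem_singleton] at ha hb
      rcases ha with ha | ha <;> rcases hb with hb | hb <;> subst ha <;> subst hb
      · exact absurd rfl hab
      · exact ⟨Ne.symm hne1, Ne.symm h1, Ne.symm hne2, Ne.symm h2⟩
      · exact ⟨hne1, hne2, h1, h2⟩
      · exact absurd rfl hab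
    · rintro ⟨k, hk, c, hc, hpath⟩
      have hmem : ∀ i, c i = q ∨ c i = r := by
        intro i
        have := hc i
        simpa using this
      have hstep : ∀ i, c (i + 1) ≠ c i := fun i he => (hpath i).2.1 (by rw [he])
      -- extract both kinds of steps
      have hboth : (r.lo ⊆ q.hi ∧ r.lo.card + 1 = q.hi.card) ∧
          (q.lo ⊆ r.hi ∧ q.lo.card + 1 = r.hi.card) := by
        rcases hmem 0 with h0 | h0
        · have h1' : c (0 + 1) = r := by
            rcases hmem (0 + 1) with hh | hh
            · exact absurd (hh.trans h0.symm) (hstep 0)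
            · exact hh
          have h2' : c (0 + 1 + 1) = q := by
            rcases hmem (0 + 1 + 1) with hh | hh
            · exact hh
            · exact absurd (hh.trans h1'.symm) (hstep (0 + 1))
          have p0 := hpath 0
          have p1 := hpath (0 + 1)
          rw [h0, h1'] at p0
          rw [h1', h2'] at p1
          exact ⟨⟨p0.1, p0.2.2⟩, ⟨p1.1, p1.2.2⟩⟩
        · have h1' : c (0 + 1) = q := by
            rcases hmem (0 + 1) with hh | hh
            · exact hh
            · exact absurd (hh.trans h0.symm) (hstep 0)
          have h2' : c (0 + 1 + 1) = r := by
            rcases hmem (0 + 1 + 1) with hh | hh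
            · exact absurd (hh.trans h1'.symm) (hstep (0 + 1))
            · exact hh
          have p0 := hpath 0
          have p1 := hpath (0 + 1)
          rw [h0, h1'] at p0
          rw [h1', h2'] at p1
          exact ⟨⟨p1.1, p1.2.2⟩, ⟨p0.1, p0.2.2⟩⟩
      obtain ⟨⟨hA1, hA2⟩, ⟨hB1, hB2⟩⟩ := hboth
      rw [hrlo] at hA1 hA2
      rw [hrhi] at hB1 hB2
      rw [Finset.card_erase_of_mem hx] at hA2
      -- q.lo = p.lo.erase y for some y
      have hsd : (p.lo \ q.lo).card = 1 := by
        rw [Finset.card_sdiff_of_subset hB1]; omega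
      obtain ⟨y, hy'⟩ := Finset.card_eq_one.mp hsd
      have hyp : y ∈ p.lo := by
        have : y ∈ p.lo \ q.lo := hy' ▸ Finset.mem_singleton_self y
        exact (Finset.mem_sdiff.mp this).1
      have hqlo_eq : q.lo = p.lo.erase y := by
        have hss := Finset.sdiff_sdiff_eq_self hB1
        rw [hy', Finset.sdiff_singleton_eq_erase] at hss
        exact hss.symm
      have hxy' : x ≠ y := fun he => hne1 (by rw [hqlo_eq, he])
      have hsub : p.lo ⊆ q.hi := by
        intro z hz
        by_cases hzx : z = x
        · exact q.lo_sub (hqlo_eq ▸ Finset.mem_erase.mpr ⟨hzx ▸ hxy', hz⟩)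
        · exact hA1 (Finset.mem_erase.mpr ⟨hzx, hz⟩)
      have : p.lo = q.hi := Finset.eq_of_subset_of_card_le hsub (by omega)
      exact h2 this
  -- extend {q, r} to a facet; domination puts p there, conflicting with r
  obtain ⟨T2, hT2, hsubT2⟩ := exists_morse_facet K {q, r} hface
  have hqT2 : q ∈ T2 := hsubT2 (by simp)
  have hrT2 : r ∈ T2 := hsubT2 (by simp)
  have hpT2 : p ∈ T2 := h T2 hT2 hqT2
  have hpr : p ≠ r := by
    intro he
    have : p.hi = r.hi := by rw [he]
    rw [hrhi] at this
    have := congrArg Finset.card this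
    rw [p.card_eq] at this
    omega
  obtain ⟨-, hc2, -, -⟩ := hT2.1.2.1 p hpT2 r hrT2 hpr
  exact hc2 hrhi.symm
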